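/- The Study quadric S = {[x₀:x₁:x₂:x₃:y₀:y₁:y₂:y₃] ∈ ℙ⁷(ℝ) : Σᵢ xᵢyᵢ = 0} minus the 3-plane E = {x₀=x₁=x₂=x₃=0} is in bijection with SE(3,ℝ), via [x,y] ↦ (u ↦ (1/Δ(x))(R(x)u + t(x,y))), where Δ(x) = Σ xᵢ², R is the quaternion rotation matrix formula and t the translation formula. -/

import Mathlib

open Matrix

/-- The quaternion rotation matrix formula, homogeneous of degree 2. -/
def Rmat (x : Fin 4 → ℝ) : Matrix (Fin 3) (Fin 3) ℝ :=
  !![x 0 ^ 2 + x 1 ^ 2 - x 2 ^ 2 - x 3 ^ 2, 2 * (x 1 * x 2 - x 0 * x 3), 2 * (x 1 * x 3 + x 0 * x 2);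
     2 * (x 1 * x 2 + x 0 * x 3), x 0 ^ 2 - x 1 ^ 2 + x 2 ^ 2 - x 3 ^ 2, 2 * (x 2 * x 3 - x 0 * x 1);
     2 * (x 1 * x 3 - x 0 * x 2), 2 * (x 2 * x 3 + x 0 * x 1), x 0 ^ 2 - x 1 ^ 2 - x 2 ^ 2 + x 3 ^ 2]

/-- The Study translation vector `t(x, y)`. -/
def tvec (x y : Fin 4 → ℝ) : Fin 3 → ℝ :=
  ![2 * (x 0 * y 1 - x 1 * y 0 + x 2 * y 3 - x 3 * y 2),
    2 * (x 0 * y 2 - x 1 * y 3 - x 2 * y 0 + x 3 * y 1),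
    2 * (x 0 * y 3 + x 1 * y 2 - x 2 * y 1 - x 3 * y 0)]

/-- `Δ(x) = Σ xᵢ²`. -/
def Delta (x : Fin 4 → ℝ) : ℝ := ∑ i : Fin 4, x i ^ 2

/-- The rigid motion `u ↦ (1/Δ(x)) (R(x) u + t(x, y))` attached to Study coordinates. -/
noncomputable def motionF (x y : Fin 4 → ℝ) : (Fin 3 → ℝ) → (Fin 3 → ℝ) :=
  fun u => (Delta x)⁻¹ • ((Rmat x).mulVec u + tvec x y)

/-- `SE(3, ℝ)`: rigid motions `u ↦ R u + t` with `R ∈ SO(3, ℝ)`. -/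
def SE3 : Set ((Fin 3 → ℝ) → (Fin 3 → ℝ)) :=
  {f | ∃ (R : Matrix (Fin 3) (Fin 3) ℝ) (t : Fin 3 → ℝ),
    R * Rᵀ = 1 ∧ R.det = 1 ∧ f = fun u => R.mulVec u + t}


lemma Delta_expand (x : Fin 4 → ℝ) : Delta x = x 0 ^2 + x 1 ^2 + x 2 ^2 + x 3 ^2 := by
  simp [Delta, Fin.sum_univ_four]

lemma Rmat_mul_transpose (x : Fin 4 → ℝ) : Rmat x * (Rmat x)ᵀ = (Delta x ^ 2) • 1 := by
  have htr : (Rmat x)ᵀ =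
    !![x 0 ^ 2 + x 1 ^ 2 - x 2 ^ 2 - x 3 ^ 2, 2 * (x 1 * x 2 + x 0 * x 3), 2 * (x 1 * x 3 - x 0 * x 2);
       2 * (x 1 * x 2 - x 0 * x 3), x 0 ^ 2 - x 1 ^ 2 + x 2 ^ 2 - x 3 ^ 2, 2 * (x 2 * x 3 + x 0 * x 1);
       2 * (x 1 * x 3 + x 0 * x 2), 2 * (x 2 * x 3 - x 0 * x 1), x 0 ^ 2 - x 1 ^ 2 - x 2 ^ 2 + x 3 ^ 2] := by
    ext i j; fin_cases i <;> fin_cases j <;> rfl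
  rw [show Rmat x = _ from rfl, htr, Rmat, Matrix.mul_fin_three]
  ext i j
  fin_cases i <;> fin_cases j <;>
    simp [Delta_expand, Matrix.one_apply, Fin.ext_iff] <;> ring

lemma Rmat_det (x : Fin 4 → ℝ) : (Rmat x).det = Delta x ^ 3 := by
  rw [Matrix.det_fin_three, Delta_expand]
  simp [Rmat]; ring

lemma part1 (x y : Fin 4 → ℝ) (hx : Delta x ≠ 0) : motionF x y ∈ SE3 := by
  refine ⟨(Delta x)⁻¹ • Rmat x, (Delta x)⁻¹ • tvec x y, ?_, ?_, ?_⟩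
  · rw [Matrix.transpose_smul, Matrix.smul_mul, Matrix.mul_smul, Rmat_mul_transpose,
      smul_smul, smul_smul]
    rw [show (Delta x)⁻¹ * (Delta x)⁻¹ * Delta x ^ 2 = 1 by field_simp, one_smul]
  · rw [Matrix.det_smul, Rmat_det]
    simp
    field_simp
  · funext u
    simp [motionF, smul_add, Matrix.smul_mulVec]

lemma delta_smul (x : Fin 4 → ℝ) (c : ℝ) : Delta (c • x) = c ^ 2 * Delta x := by
  rw [Delta_expand, Delta_expand x]
  simp only [Pi.smul_apply, smul_eq_mul]
  ring

lemma part2bwd (x y : Fin 4 → ℝ) (hx : Delta x ≠ 0) (c : ℝ) (hc : c ≠ 0) :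
    motionF (c • x) (c • y) = motionF x y := by
  have hdd := delta_smul x c
  funext u
  funext i
  fin_cases i <;>
    simp only [motionF, hdd, Matrix.mulVec, dotProduct, Fin.sum_univ_three, Rmat, tvec,
      Pi.smul_apply, Pi.add_apply, smul_eq_mul, Fin.reduceFinMk, Fin.isValue,
      Matrix.cons_val', Matrix.cons_val_zero, Matrix.cons_val_one, Matrix.head_cons,
      Matrix.empty_val', Matrix.cons_val_fin_one, Matrix.head_fin_const, Matrix.cons_val_two,
      Matrix.tail_cons, Matrix.of_apply] <;>
    field_simp <;> ring

lemma part2fwd (x y x' y' : Fin 4 → ℝ) (hxy : ∑ i : Fin 4, x i * y i = 0) (hx : Delta x ≠ 0)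
    (hxy' : ∑ i : Fin 4, x' i * y' i = 0) (hx' : Delta x' ≠ 0)
    (heq : motionF x y = motionF x' y') : ∃ c : ℝ, c ≠ 0 ∧ x' = c • x ∧ y' = c • y := by
  have hT : ∀ i, Delta x' * tvec x y i = Delta x * tvec x' y' i := by
    intro i
    have h0 := congrFun (congrFun heq 0) i
    simp only [motionF, Matrix.mulVec_zero, zero_add, Pi.smul_apply, smul_eq_mul] at h0
    field_simp at h0
    linarith
  have key : ∀ i j, Delta x' * Rmat x i j = Delta x * Rmat x' i j := by
    intro i j
    have h1 := congrFun (congrFun heq (Pi.single j 1)) i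
    have h0 := congrFun (congrFun heq 0) i
    simp only [motionF, Matrix.mulVec_single, Matrix.mulVec_zero, zero_add, Pi.smul_apply,
      Pi.add_apply, smul_eq_mul, mul_one, MulOpposite.op_one, one_smul, Matrix.col_apply] at h1 h0
    field_simp at h1 h0
    linarith
  have dx := Delta_expand x
  have dx' := Delta_expand x'
  have E00 : Delta x' * (x 0 ^ 2 + x 1 ^ 2 - x 2 ^ 2 - x 3 ^ 2) = Delta x * (x' 0 ^ 2 + x' 1 ^ 2 - x' 2 ^ 2 - x' 3 ^ 2) := by
    have h := key 0 0
    simp [Rmat] at h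
    linear_combination h
  have E01 : Delta x' * (2 * (x 1 * x 2 - x 0 * x 3)) = Delta x * (2 * (x' 1 * x' 2 - x' 0 * x' 3)) := by
    have h := key 0 1
    simp [Rmat] at h
    linear_combination h
  have E02 : Delta x' * (2 * (x 1 * x 3 + x 0 * x 2)) = Delta x * (2 * (x' 1 * x' 3 + x' 0 * x' 2)) := by
    have h := key 0 2
    simp [Rmat] at h
    linear_combination h
  have E10 : Delta x' * (2 * (x 1 * x 2 + x 0 * x 3)) = Delta x * (2 * (x' 1 * x' 2 + x' 0 * x' 3)) := by
    have h := key 1 0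
    simp [Rmat] at h
    linear_combination h
  have E11 : Delta x' * (x 0 ^ 2 - x 1 ^ 2 + x 2 ^ 2 - x 3 ^ 2) = Delta x * (x' 0 ^ 2 - x' 1 ^ 2 + x' 2 ^ 2 - x' 3 ^ 2) := by
    have h := key 1 1
    simp [Rmat] at h
    linear_combination h
  have E12 : Delta x' * (2 * (x 2 * x 3 - x 0 * x 1)) = Delta x * (2 * (x' 2 * x' 3 - x' 0 * x' 1)) := by
    have h := key 1 2
    simp [Rmat] at h
    linear_combination h
  have E20 : Delta x' * (2 * (x 1 * x 3 - x 0 * x 2)) = Delta x * (2 * (x' 1 * x' 3 - x' 0 * x' 2)) := by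
    have h := key 2 0
    simp [Rmat] at h
    linear_combination h
  have E21 : Delta x' * (2 * (x 2 * x 3 + x 0 * x 1)) = Delta x * (2 * (x' 2 * x' 3 + x' 0 * x' 1)) := by
    have h := key 2 1
    simp [Rmat] at h
    linear_combination h
  have E22 : Delta x' * (x 0 ^ 2 - x 1 ^ 2 - x 2 ^ 2 + x 3 ^ 2) = Delta x * (x' 0 ^ 2 - x' 1 ^ 2 - x' 2 ^ 2 + x' 3 ^ 2) := by
    have h := key 2 2
    simp [Rmat] at h
    linear_combination h
  have P : ∀ i j : Fin 4, Delta x' * (x i * x j) = Delta x * (x' i * x' j) := by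
    intro i j
    fin_cases i <;> fin_cases j <;> simp only [Fin.reduceFinMk, Fin.isValue]
    · linear_combination (E00 + E11 + E22 - Delta x' * dx + Delta x * dx')/4
    · linear_combination (E21 - E12)/4
    · linear_combination (E02 - E20)/4
    · linear_combination (E10 - E01)/4
    · linear_combination (E21 - E12)/4
    · linear_combination (E00 - E11 - E22 - Delta x' * dx + Delta x * dx')/4
    · linear_combination (E10 + E01)/4
    · linear_combination (E20 + E02)/4
    · linear_combination (E02 - E20)/4
    · linear_combination (E10 + E01)/4
    · linear_combination (-E00 + E11 - E22 - Delta x' * dx + Delta x * dx')/4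
    · linear_combination (E21 + E12)/4
    · linear_combination (E10 - E01)/4
    · linear_combination (E20 + E02)/4
    · linear_combination (E21 + E12)/4
    · linear_combination (-E00 - E11 + E22 - Delta x' * dx + Delta x * dx')/4
  have hk : ∃ k, x k ≠ 0 := by
    by_contra hcon
    push_neg at hcon
    exact hx (by rw [Delta_expand, hcon 0, hcon 1, hcon 2, hcon 3]; ring)
  obtain ⟨k, hxk⟩ := hk
  have hx'k : x' k ≠ 0 := by
    intro h
    have h2 : Delta x' * (x k * x k) = 0 := by rw [P k k, h]; ring
    rcases mul_eq_zero.mp h2 with h3 | h3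
    · exact hx' h3
    · rcases mul_eq_zero.mp h3 with h4 | h4 <;> exact hxk h4
  obtain ⟨c, hc0, hxx⟩ : ∃ c : ℝ, c ≠ 0 ∧ x' = c • x := by
    refine ⟨x' k / x k, div_ne_zero hx'k hxk, ?_⟩
    funext i
    have h2 : (x' i * x k - x' k * x i) * (Delta x * x' k) = 0 := by
      linear_combination x i * P k k - x k * P i k
    have h3 := (mul_eq_zero.mp h2).resolve_right (mul_ne_zero hx hx'k)
    simp only [Pi.smul_apply, smul_eq_mul]
    field_simp
    linarith
  subst hxx
  have hdd := delta_smul x c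
  have hsy : x 0 * y 0 + x 1 * y 1 + x 2 * y 2 + x 3 * y 3 = 0 := by
    have h := hxy
    simp [Fin.sum_univ_four] at h
    linear_combination h
  have hsy' : x 0 * y' 0 + x 1 * y' 1 + x 2 * y' 2 + x 3 * y' 3 = 0 := by
    have h := hxy'
    simp [Fin.sum_univ_four] at h
    have h2 : c * (x 0 * y' 0 + x 1 * y' 1 + x 2 * y' 2 + x 3 * y' 3) = 0 := by
      linear_combination h
    exact (mul_eq_zero.mp h2).resolve_left hc0
  have ht1 : c^2 * Delta x * (2 * (x 0 * y 1 - x 1 * y 0 + x 2 * y 3 - x 3 * y 2)) = Delta x * (2 * (c * x 0 * y' 1 - c * x 1 * y' 0 + c * x 2 * y' 3 - c * x 3 * y' 2)) := by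
    have h := hT 0
    rw [hdd] at h
    simp [tvec] at h
    linear_combination h
  have ht2 : c^2 * Delta x * (2 * (x 0 * y 2 - x 1 * y 3 - x 2 * y 0 + x 3 * y 1)) = Delta x * (2 * (c * x 0 * y' 2 - c * x 1 * y' 3 - c * x 2 * y' 0 + c * x 3 * y' 1)) := by
    have h := hT 1
    rw [hdd] at h
    simp [tvec] at h
    linear_combination h
  have ht3 : c^2 * Delta x * (2 * (x 0 * y 3 + x 1 * y 2 - x 2 * y 1 - x 3 * y 0)) = Delta x * (2 * (c * x 0 * y' 3 + c * x 1 * y' 2 - c * x 2 * y' 1 - c * x 3 * y' 0)) := by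
    have h := hT 2
    rw [hdd] at h
    simp [tvec] at h
    linear_combination h
  have hy0 : y' 0 = c * y 0 := by
    have h2 : (y' 0 - c * y 0) * (c * Delta x * Delta x) = 0 := by
      linear_combination (c*Delta x*x 0) * hsy' - (c^2*Delta x*x 0)*hsy + (x 1/2)*ht1 + (x 2/2)*ht2 + (x 3/2)*ht3 + (c*Delta x*(y' 0 - c*y 0))*dx
    have h3 := (mul_eq_zero.mp h2).resolve_right (mul_ne_zero (mul_ne_zero hc0 hx) hx)
    linarith
  have hy1 : y' 1 = c * y 1 := by
    have h2 : (y' 1 - c * y 1) * (c * Delta x * Delta x) = 0 := by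
      linear_combination (c*Delta x*x 1) * hsy' - (c^2*Delta x*x 1)*hsy - (x 0/2)*ht1 - (x 3/2)*ht2 + (x 2/2)*ht3 + (c*Delta x*(y' 1 - c*y 1))*dx
    have h3 := (mul_eq_zero.mp h2).resolve_right (mul_ne_zero (mul_ne_zero hc0 hx) hx)
    linarith
  have hy2 : y' 2 = c * y 2 := by
    have h2 : (y' 2 - c * y 2) * (c * Delta x * Delta x) = 0 := by
      linear_combination (c*Delta x*x 2) * hsy' - (c^2*Delta x*x 2)*hsy + (x 3/2)*ht1 - (x 0/2)*ht2 - (x 1/2)*ht3 + (c*Delta x*(y' 2 - c*y 2))*dx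
    have h3 := (mul_eq_zero.mp h2).resolve_right (mul_ne_zero (mul_ne_zero hc0 hx) hx)
    linarith
  have hy3 : y' 3 = c * y 3 := by
    have h2 : (y' 3 - c * y 3) * (c * Delta x * Delta x) = 0 := by
      linear_combination (c*Delta x*x 3) * hsy' - (c^2*Delta x*x 3)*hsy - (x 2/2)*ht1 + (x 1/2)*ht2 - (x 0/2)*ht3 + (c*Delta x*(y' 3 - c*y 3))*dx
    have h3 := (mul_eq_zero.mp h2).resolve_right (mul_ne_zero (mul_ne_zero hc0 hx) hx)
    linarith
  refine ⟨c, hc0, rfl, ?_⟩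
  funext i
  fin_cases i <;> simp only [Fin.reduceFinMk, Fin.isValue, Pi.smul_apply, smul_eq_mul] <;>
    [exact hy0; exact hy1; exact hy2; exact hy3]

lemma caseLemma (R : Matrix (Fin 3) (Fin 3) ℝ) (t : Fin 3 → ℝ) (x : Fin 4 → ℝ)
    (hx : Delta x ≠ 0) (hR : Rmat x = Delta x • R) :
    ∃ x0 y : Fin 4 → ℝ, (∑ i : Fin 4, x0 i * y i = 0) ∧ Delta x0 ≠ 0 ∧
      motionF x0 y = fun u => R.mulVec u + t := by
  refine ⟨x, ![(-(x 1 * t 0) - x 2 * t 1 - x 3 * t 2)/2, (x 0 * t 0 + x 3 * t 1 - x 2 * t 2)/2,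
    (-(x 3 * t 0) + x 0 * t 1 + x 1 * t 2)/2, (x 2 * t 0 - x 1 * t 1 + x 0 * t 2)/2], ?_, hx, ?_⟩
  · simp [Fin.sum_univ_four]
    ring
  · have hty : tvec x ![(-(x 1 * t 0) - x 2 * t 1 - x 3 * t 2)/2, (x 0 * t 0 + x 3 * t 1 - x 2 * t 2)/2,
        (-(x 3 * t 0) + x 0 * t 1 + x 1 * t 2)/2, (x 2 * t 0 - x 1 * t 1 + x 0 * t 2)/2]
        = Delta x • t := by
      funext i
      fin_cases i <;>
        simp [tvec, Delta_expand, Pi.smul_apply, smul_eq_mul] <;> ring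
    funext u
    show (Delta x)⁻¹ • ((Rmat x).mulVec u + _) = _
    rw [hR, hty, Matrix.smul_mulVec, ← smul_add, inv_smul_smul₀ hx]

lemma part3 (R : Matrix (Fin 3) (Fin 3) ℝ) (t : Fin 3 → ℝ) (ho : R * Rᵀ = 1)
    (hdet : R.det = 1) :
    ∃ x y : Fin 4 → ℝ, (∑ i : Fin 4, x i * y i = 0) ∧ Delta x ≠ 0 ∧
      motionF x y = fun u => R.mulVec u + t := by
  have ho00 : R 0 0 * R 0 0 + R 0 1 * R 0 1 + R 0 2 * R 0 2 = 1 := by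
    have h := congrFun (congrFun ho 0) 0
    simp [Matrix.mul_apply, Fin.sum_univ_three, Matrix.one_apply] at h
    linear_combination h
  have ho01 : R 0 0 * R 1 0 + R 0 1 * R 1 1 + R 0 2 * R 1 2 = 0 := by
    have h := congrFun (congrFun ho 0) 1
    simp [Matrix.mul_apply, Fin.sum_univ_three, Matrix.one_apply] at h
    linear_combination h
  have ho02 : R 0 0 * R 2 0 + R 0 1 * R 2 1 + R 0 2 * R 2 2 = 0 := by
    have h := congrFun (congrFun ho 0) 2
    simp [Matrix.mul_apply, Fin.sum_univ_three, Matrix.one_apply] at h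
    linear_combination h
  have ho11 : R 1 0 * R 1 0 + R 1 1 * R 1 1 + R 1 2 * R 1 2 = 1 := by
    have h := congrFun (congrFun ho 1) 1
    simp [Matrix.mul_apply, Fin.sum_univ_three, Matrix.one_apply] at h
    linear_combination h
  have ho12 : R 1 0 * R 2 0 + R 1 1 * R 2 1 + R 1 2 * R 2 2 = 0 := by
    have h := congrFun (congrFun ho 1) 2
    simp [Matrix.mul_apply, Fin.sum_univ_three, Matrix.one_apply] at h
    linear_combination h
  have ho22 : R 2 0 * R 2 0 + R 2 1 * R 2 1 + R 2 2 * R 2 2 = 1 := by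
    have h := congrFun (congrFun ho 2) 2
    simp [Matrix.mul_apply, Fin.sum_univ_three, Matrix.one_apply] at h
    linear_combination h
  have hde := hdet
  rw [Matrix.det_fin_three] at hde
  have ht2 : Rᵀ * R = 1 := mul_eq_one_comm.mp ho
  have hadj3 : Matrix.adjugate R = Rᵀ := by
    calc Matrix.adjugate R = (Rᵀ * R) * Matrix.adjugate R := by rw [ht2, one_mul]
    _ = Rᵀ * (R * Matrix.adjugate R) := by rw [Matrix.mul_assoc]
    _ = Rᵀ := by rw [Matrix.mul_adjugate, hdet, one_smul, mul_one]
  rw [Matrix.adjugate_fin_three] at hadj3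
  have hc00 : R 1 1 * R 2 2 - R 1 2 * R 2 1 = R 0 0 := by
    have h := congrFun (congrFun hadj3 0) 0
    simp [Matrix.transpose_apply] at h
    linear_combination h
  have hc10 : -(R 0 1 * R 2 2) + R 0 2 * R 2 1 = R 1 0 := by
    have h := congrFun (congrFun hadj3 0) 1
    simp [Matrix.transpose_apply] at h
    linear_combination h
  have hc20 : R 0 1 * R 1 2 - R 0 2 * R 1 1 = R 2 0 := by
    have h := congrFun (congrFun hadj3 0) 2
    simp [Matrix.transpose_apply] at h
    linear_combination h
  have hc01 : -(R 1 0 * R 2 2) + R 1 2 * R 2 0 = R 0 1 := by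
    have h := congrFun (congrFun hadj3 1) 0
    simp [Matrix.transpose_apply] at h
    linear_combination h
  have hc11 : R 0 0 * R 2 2 - R 0 2 * R 2 0 = R 1 1 := by
    have h := congrFun (congrFun hadj3 1) 1
    simp [Matrix.transpose_apply] at h
    linear_combination h
  have hc21 : -(R 0 0 * R 1 2) + R 0 2 * R 1 0 = R 2 1 := by
    have h := congrFun (congrFun hadj3 1) 2
    simp [Matrix.transpose_apply] at h
    linear_combination h
  have hc02 : R 1 0 * R 2 1 - R 1 1 * R 2 0 = R 0 2 := by
    have h := congrFun (congrFun hadj3 2) 0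
    simp [Matrix.transpose_apply] at h
    linear_combination h
  have hc12 : -(R 0 0 * R 2 1) + R 0 1 * R 2 0 = R 1 2 := by
    have h := congrFun (congrFun hadj3 2) 1
    simp [Matrix.transpose_apply] at h
    linear_combination h
  have hc22 : R 0 0 * R 1 1 - R 0 1 * R 1 0 = R 2 2 := by
    have h := congrFun (congrFun hadj3 2) 2
    simp [Matrix.transpose_apply] at h
    linear_combination h
  have hsum : Delta ![1 + R 0 0 + R 1 1 + R 2 2, R 2 1 - R 1 2, R 0 2 - R 2 0, R 1 0 - R 0 1] + Delta ![R 2 1 - R 1 2, 1 + R 0 0 - R 1 1 - R 2 2, R 1 0 + R 0 1, R 0 2 + R 2 0] + Delta ![R 0 2 - R 2 0, R 1 0 + R 0 1, 1 + R 1 1 - R 0 0 - R 2 2, R 2 1 + R 1 2] + Delta ![R 1 0 - R 0 1, R 0 2 + R 2 0, R 2 1 + R 1 2, 1 + R 2 2 - R 0 0 - R 1 1] = 16 := by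
    simp only [Delta_expand]
    simp
    linear_combination (4:ℝ) * ho00 + (4:ℝ) * ho11 + (4:ℝ) * ho22
  by_cases h0 : Delta ![1 + R 0 0 + R 1 1 + R 2 2, R 2 1 - R 1 2, R 0 2 - R 2 0, R 1 0 - R 0 1] = 0
  · by_cases h1 : Delta ![R 2 1 - R 1 2, 1 + R 0 0 - R 1 1 - R 2 2, R 1 0 + R 0 1, R 0 2 + R 2 0] = 0
    · by_cases h2 : Delta ![R 0 2 - R 2 0, R 1 0 + R 0 1, 1 + R 1 1 - R 0 0 - R 2 2, R 2 1 + R 1 2] = 0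
      · by_cases h3 : Delta ![R 1 0 - R 0 1, R 0 2 + R 2 0, R 2 1 + R 1 2, 1 + R 2 2 - R 0 0 - R 1 1] = 0
        · exfalso
          rw [h0, h1, h2, h3] at hsum
          norm_num at hsum
        ·
          refine caseLemma R t ![R 1 0 - R 0 1, R 0 2 + R 2 0, R 2 1 + R 1 2, 1 + R 2 2 - R 0 0 - R 1 1] h3 ?_
          ext i j
          fin_cases i <;> fin_cases j <;>
            simp only [Rmat, Delta_expand, Matrix.smul_apply, smul_eq_mul, Fin.reduceFinMk, Fin.isValue,
              Matrix.cons_val', Matrix.cons_val_zero, Matrix.cons_val_one, Matrix.head_cons,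
              Matrix.empty_val', Matrix.cons_val_fin_one, Matrix.head_fin_const, Matrix.cons_val_two,
              Matrix.cons_val_three, Matrix.tail_cons, Matrix.of_apply]
          · linear_combination (1) * ho00 + (-1) * (R 0 0) * ho00 + (-2) * (R 1 1) * ho00 + (2) * (R 2 2) * ho00 + (2) * (R 0 1) * ho01 + (-2) * (R 0 2) * ho02 + (-1) * ho11 + (-1) * (R 0 0) * ho11 + (-1) * ho22 + (-1) * (R 0 0) * ho22 + (2) * hde + (2) * hc00 + (2) * (R 0 1) * hc10 + (-2) * (R 1 0) * hc10 + (-2) * (R 0 2) * hc20 + (-2) * (R 2 0) * hc20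
          · linear_combination (-1) * (R 0 1) * ho00 + (2) * (R 1 0) * ho00 + (2) * ho01 + (-2) * (R 0 0) * ho01 + (-1) * (R 0 1) * ho11 + (-1) * (R 0 1) * ho22 + (2) * hc01 + (-2) * (R 1 1) * hc10 + (2) * (R 0 1) * hc11 + (-2) * (R 2 1) * hc20 + (-2) * (R 0 2) * hc21
          · linear_combination (-1) * (R 0 2) * ho00 + (-1) * (R 0 2) * ho11 + (-2) * (R 2 0) * ho11 + (2) * (R 1 0) * ho12 + (-1) * (R 0 2) * ho22 + (2) * (R 1 2) * hc01 + (2) * hc02 + (-2) * (R 1 1) * hc02 + (-2) * (R 1 2) * hc10 + (2) * (R 0 2) * hc11 + (2) * (R 0 0) * hc20 + (-2) * (R 2 2) * hc20 + (2) * (R 0 1) * hc21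
          · linear_combination (-1) * (R 1 0) * ho00 + (2) * ho01 + (-2) * (R 1 1) * ho01 + (2) * (R 2 2) * ho01 + (2) * (R 0 1) * ho11 + (-1) * (R 1 0) * ho11 + (-2) * (R 0 2) * ho12 + (-2) * (R 2 0) * ho12 + (1) * (R 1 0) * ho22 + (-2) * (R 0 1) * hc00 + (2) * (R 1 0) * hc00 + (2) * (R 2 2) * hc01 + (-2) * (R 2 1) * hc02 + (-2) * (R 1 2) * hc20 + (-2) * (R 2 1) * hc20
          · linear_combination (-1) * ho00 + (-1) * (R 1 1) * ho00 + (2) * (R 1 0) * ho01 + (1) * ho11 + (-2) * (R 0 0) * ho11 + (-1) * (R 1 1) * ho11 + (2) * (R 2 2) * ho11 + (-2) * (R 1 2) * ho12 + (-2) * (R 2 1) * ho12 + (-1) * ho22 + (1) * (R 1 1) * ho22 + (2) * hde + (-2) * (R 2 2) * hc00 + (-2) * (R 0 1) * hc01 + (2) * (R 1 0) * hc01 + (2) * (R 2 0) * hc02 + (-2) * (R 1 2) * hc21 + (-2) * (R 2 1) * hc21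
          · linear_combination (-1) * (R 1 2) * ho00 + (-1) * (R 1 2) * ho11 + (-2) * (R 2 1) * ho11 + (2) * (R 1 1) * ho12 + (-2) * (R 2 2) * ho12 + (1) * (R 1 2) * ho22 + (2) * (R 2 1) * hc00 + (-2) * (R 0 2) * hc01 + (-2) * (R 2 0) * hc01 + (2) * (R 1 0) * hc02 + (2) * (R 1 0) * hc20 + (2) * (R 1 1) * hc21 + (-2) * (R 2 2) * hc21
          · linear_combination (-1) * (R 2 0) * ho00 + (2) * ho02 + (-2) * (R 1 1) * ho02 + (2) * (R 2 2) * ho02 + (1) * (R 2 0) * ho11 + (2) * (R 0 1) * ho12 + (-2) * (R 1 0) * ho12 + (-2) * (R 0 2) * ho22 + (-1) * (R 2 0) * ho22 + (2) * (R 0 2) * hc00 + (2) * (R 2 0) * hc00 + (-2) * (R 1 2) * hc01 + (2) * (R 1 1) * hc02 + (2) * (R 1 2) * hc10 + (2) * (R 2 1) * hc10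
          · linear_combination (-1) * (R 2 1) * ho00 + (2) * (R 1 0) * ho02 + (1) * (R 2 1) * ho11 + (2) * ho12 + (-2) * (R 0 0) * ho12 + (-2) * (R 1 1) * ho12 + (2) * (R 2 2) * ho12 + (-2) * (R 1 2) * ho22 + (-1) * (R 2 1) * ho22 + (2) * (R 1 2) * hc00 + (2) * (R 0 2) * hc01 + (2) * (R 2 0) * hc01 + (-2) * (R 1 0) * hc02 + (2) * (R 1 2) * hc11 + (2) * (R 2 1) * hc11
          · linear_combination (-1) * ho00 + (-1) * (R 2 2) * ho00 + (-1) * ho11 + (1) * (R 2 2) * ho11 + (-2) * (R 1 2) * ho12 + (-2) * (R 2 1) * ho12 + (-1) * ho22 + (2) * (R 1 1) * ho22 + (-1) * (R 2 2) * ho22 + (2) * hde + (2) * hc00 + (-2) * (R 0 0) * hc00 + (-2) * (R 1 1) * hc00 + (-2) * (R 0 1) * hc01 + (2) * (R 1 0) * hc01 + (2) * (R 2 0) * hc02 + (-2) * (R 1 0) * hc10 + (-2) * (R 1 1) * hc11 + (2) * (R 2 2) * hc11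
      ·
        refine caseLemma R t ![R 0 2 - R 2 0, R 1 0 + R 0 1, 1 + R 1 1 - R 0 0 - R 2 2, R 2 1 + R 1 2] h2 ?_
        ext i j
        fin_cases i <;> fin_cases j <;>
          simp only [Rmat, Delta_expand, Matrix.smul_apply, smul_eq_mul, Fin.reduceFinMk, Fin.isValue,
            Matrix.cons_val', Matrix.cons_val_zero, Matrix.cons_val_one, Matrix.head_cons,
            Matrix.empty_val', Matrix.cons_val_fin_one, Matrix.head_fin_const, Matrix.cons_val_two,
            Matrix.cons_val_three, Matrix.tail_cons, Matrix.of_apply]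
        · linear_combination (1) * ho00 + (-1) * (R 0 0) * ho00 + (2) * (R 1 1) * ho00 + (-2) * (R 2 2) * ho00 + (-2) * (R 0 1) * ho01 + (2) * (R 0 2) * ho02 + (-1) * ho11 + (-1) * (R 0 0) * ho11 + (-1) * ho22 + (-1) * (R 0 0) * ho22 + (2) * hde + (2) * hc00 + (-2) * (R 0 1) * hc10 + (-2) * (R 1 0) * hc10 + (2) * (R 0 2) * hc20 + (-2) * (R 2 0) * hc20
        · linear_combination (-1) * (R 0 1) * ho00 + (-2) * (R 1 0) * ho00 + (-2) * ho01 + (2) * (R 0 0) * ho01 + (-1) * (R 0 1) * ho11 + (-1) * (R 0 1) * ho22 + (2) * hc01 + (-2) * (R 1 1) * hc10 + (-2) * (R 0 1) * hc11 + (-2) * (R 2 1) * hc20 + (2) * (R 0 2) * hc21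
        · linear_combination (-1) * (R 0 2) * ho00 + (-1) * (R 0 2) * ho11 + (2) * (R 2 0) * ho11 + (-2) * (R 1 0) * ho12 + (-1) * (R 0 2) * ho22 + (-2) * (R 1 2) * hc01 + (2) * hc02 + (2) * (R 1 1) * hc02 + (-2) * (R 1 2) * hc10 + (-2) * (R 0 2) * hc11 + (-2) * (R 0 0) * hc20 + (-2) * (R 2 2) * hc20 + (-2) * (R 0 1) * hc21
        · linear_combination (-1) * (R 1 0) * ho00 + (2) * ho01 + (2) * (R 1 1) * ho01 + (-2) * (R 2 2) * ho01 + (-2) * (R 0 1) * ho11 + (-1) * (R 1 0) * ho11 + (2) * (R 0 2) * ho12 + (-2) * (R 2 0) * ho12 + (1) * (R 1 0) * ho22 + (2) * (R 0 1) * hc00 + (2) * (R 1 0) * hc00 + (2) * (R 2 2) * hc01 + (-2) * (R 2 1) * hc02 + (2) * (R 1 2) * hc20 + (2) * (R 2 1) * hc20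
        · linear_combination (1) * ho00 + (-1) * (R 1 1) * ho00 + (-2) * (R 1 0) * ho01 + (-1) * ho11 + (2) * (R 0 0) * ho11 + (-1) * (R 1 1) * ho11 + (2) * (R 2 2) * ho11 + (-2) * (R 1 2) * ho12 + (-2) * (R 2 1) * ho12 + (1) * ho22 + (1) * (R 1 1) * ho22 + (-2) * hde + (-2) * (R 2 2) * hc00 + (2) * (R 0 1) * hc01 + (2) * (R 1 0) * hc01 + (2) * (R 2 0) * hc02 + (2) * (R 1 2) * hc21 + (2) * (R 2 1) * hc21
        · linear_combination (-1) * (R 1 2) * ho00 + (-1) * (R 1 2) * ho11 + (-2) * (R 2 1) * ho11 + (2) * (R 1 1) * ho12 + (-2) * (R 2 2) * ho12 + (1) * (R 1 2) * ho22 + (2) * (R 2 1) * hc00 + (2) * (R 0 2) * hc01 + (-2) * (R 2 0) * hc01 + (2) * (R 1 0) * hc02 + (-2) * (R 1 0) * hc20 + (-2) * (R 1 1) * hc21 + (2) * (R 2 2) * hc21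
        · linear_combination (-1) * (R 2 0) * ho00 + (2) * ho02 + (2) * (R 1 1) * ho02 + (-2) * (R 2 2) * ho02 + (1) * (R 2 0) * ho11 + (-2) * (R 0 1) * ho12 + (-2) * (R 1 0) * ho12 + (2) * (R 0 2) * ho22 + (-1) * (R 2 0) * ho22 + (-2) * (R 0 2) * hc00 + (2) * (R 2 0) * hc00 + (-2) * (R 1 2) * hc01 + (2) * (R 1 1) * hc02 + (-2) * (R 1 2) * hc10 + (-2) * (R 2 1) * hc10
        · linear_combination (-1) * (R 2 1) * ho00 + (-2) * (R 1 0) * ho02 + (1) * (R 2 1) * ho11 + (-2) * ho12 + (2) * (R 0 0) * ho12 + (-2) * (R 1 1) * ho12 + (2) * (R 2 2) * ho12 + (-2) * (R 1 2) * ho22 + (-1) * (R 2 1) * ho22 + (2) * (R 1 2) * hc00 + (-2) * (R 0 2) * hc01 + (2) * (R 2 0) * hc01 + (-2) * (R 1 0) * hc02 + (-2) * (R 1 2) * hc11 + (-2) * (R 2 1) * hc11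
        · linear_combination (1) * ho00 + (-1) * (R 2 2) * ho00 + (1) * ho11 + (1) * (R 2 2) * ho11 + (-2) * (R 1 2) * ho12 + (-2) * (R 2 1) * ho12 + (1) * ho22 + (2) * (R 1 1) * ho22 + (-1) * (R 2 2) * ho22 + (-2) * hde + (-2) * hc00 + (2) * (R 0 0) * hc00 + (-2) * (R 1 1) * hc00 + (2) * (R 0 1) * hc01 + (2) * (R 1 0) * hc01 + (2) * (R 2 0) * hc02 + (2) * (R 1 0) * hc10 + (2) * (R 1 1) * hc11 + (-2) * (R 2 2) * hc11
    ·
      refine caseLemma R t ![R 2 1 - R 1 2, 1 + R 0 0 - R 1 1 - R 2 2, R 1 0 + R 0 1, R 0 2 + R 2 0] h1 ?_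
      ext i j
      fin_cases i <;> fin_cases j <;>
        simp only [Rmat, Delta_expand, Matrix.smul_apply, smul_eq_mul, Fin.reduceFinMk, Fin.isValue,
          Matrix.cons_val', Matrix.cons_val_zero, Matrix.cons_val_one, Matrix.head_cons,
          Matrix.empty_val', Matrix.cons_val_fin_one, Matrix.head_fin_const, Matrix.cons_val_two,
          Matrix.cons_val_three, Matrix.tail_cons, Matrix.of_apply]
      · linear_combination (-1) * ho00 + (-1) * (R 0 0) * ho00 + (2) * (R 1 1) * ho00 + (2) * (R 2 2) * ho00 + (-2) * (R 0 1) * ho01 + (-2) * (R 0 2) * ho02 + (1) * ho11 + (-1) * (R 0 0) * ho11 + (1) * ho22 + (-1) * (R 0 0) * ho22 + (-2) * hde + (2) * hc00 + (2) * (R 0 1) * hc10 + (2) * (R 1 0) * hc10 + (2) * (R 0 2) * hc20 + (2) * (R 2 0) * hc20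
      · linear_combination (-1) * (R 0 1) * ho00 + (-2) * (R 1 0) * ho00 + (2) * ho01 + (2) * (R 0 0) * ho01 + (-1) * (R 0 1) * ho11 + (-1) * (R 0 1) * ho22 + (2) * hc01 + (2) * (R 1 1) * hc10 + (2) * (R 0 1) * hc11 + (2) * (R 2 1) * hc20 + (2) * (R 0 2) * hc21
      · linear_combination (-1) * (R 0 2) * ho00 + (-1) * (R 0 2) * ho11 + (-2) * (R 2 0) * ho11 + (2) * (R 1 0) * ho12 + (-1) * (R 0 2) * ho22 + (2) * (R 1 2) * hc01 + (2) * hc02 + (-2) * (R 1 1) * hc02 + (2) * (R 1 2) * hc10 + (2) * (R 0 2) * hc11 + (-2) * (R 0 0) * hc20 + (2) * (R 2 2) * hc20 + (-2) * (R 0 1) * hc21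
      · linear_combination (-1) * (R 1 0) * ho00 + (-2) * ho01 + (2) * (R 1 1) * ho01 + (2) * (R 2 2) * ho01 + (-2) * (R 0 1) * ho11 + (-1) * (R 1 0) * ho11 + (-2) * (R 0 2) * ho12 + (-2) * (R 2 0) * ho12 + (1) * (R 1 0) * ho22 + (-2) * (R 0 1) * hc00 + (-2) * (R 1 0) * hc00 + (2) * (R 2 2) * hc01 + (-2) * (R 2 1) * hc02 + (2) * (R 1 2) * hc20 + (-2) * (R 2 1) * hc20
      · linear_combination (-1) * ho00 + (-1) * (R 1 1) * ho00 + (-2) * (R 1 0) * ho01 + (1) * ho11 + (2) * (R 0 0) * ho11 + (-1) * (R 1 1) * ho11 + (-2) * (R 2 2) * ho11 + (2) * (R 1 2) * ho12 + (-2) * (R 2 1) * ho12 + (-1) * ho22 + (1) * (R 1 1) * ho22 + (2) * hde + (-2) * (R 2 2) * hc00 + (-2) * (R 0 1) * hc01 + (-2) * (R 1 0) * hc01 + (2) * (R 2 0) * hc02 + (2) * (R 1 2) * hc21 + (-2) * (R 2 1) * hc21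
      · linear_combination (-1) * (R 1 2) * ho00 + (-1) * (R 1 2) * ho11 + (2) * (R 2 1) * ho11 + (-2) * (R 1 1) * ho12 + (-2) * (R 2 2) * ho12 + (1) * (R 1 2) * ho22 + (2) * (R 2 1) * hc00 + (-2) * (R 0 2) * hc01 + (-2) * (R 2 0) * hc01 + (-2) * (R 1 0) * hc02 + (-2) * (R 1 0) * hc20 + (-2) * (R 1 1) * hc21 + (-2) * (R 2 2) * hc21
      · linear_combination (-1) * (R 2 0) * ho00 + (-2) * ho02 + (2) * (R 1 1) * ho02 + (2) * (R 2 2) * ho02 + (1) * (R 2 0) * ho11 + (-2) * (R 0 1) * ho12 + (-2) * (R 1 0) * ho12 + (-2) * (R 0 2) * ho22 + (-1) * (R 2 0) * ho22 + (-2) * (R 0 2) * hc00 + (-2) * (R 2 0) * hc00 + (-2) * (R 1 2) * hc01 + (2) * (R 1 1) * hc02 + (-2) * (R 1 2) * hc10 + (2) * (R 2 1) * hc10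
      · linear_combination (-1) * (R 2 1) * ho00 + (-2) * (R 1 0) * ho02 + (1) * (R 2 1) * ho11 + (2) * ho12 + (2) * (R 0 0) * ho12 + (-2) * (R 1 1) * ho12 + (-2) * (R 2 2) * ho12 + (2) * (R 1 2) * ho22 + (-1) * (R 2 1) * ho22 + (2) * (R 1 2) * hc00 + (-2) * (R 0 2) * hc01 + (-2) * (R 2 0) * hc01 + (-2) * (R 1 0) * hc02 + (-2) * (R 1 2) * hc11 + (2) * (R 2 1) * hc11
      · linear_combination (1) * ho00 + (-1) * (R 2 2) * ho00 + (1) * ho11 + (1) * (R 2 2) * ho11 + (-2) * (R 1 2) * ho12 + (2) * (R 2 1) * ho12 + (1) * ho22 + (-2) * (R 1 1) * ho22 + (-1) * (R 2 2) * ho22 + (-2) * hde + (2) * hc00 + (2) * (R 0 0) * hc00 + (-2) * (R 1 1) * hc00 + (2) * (R 0 1) * hc01 + (2) * (R 1 0) * hc01 + (-2) * (R 2 0) * hc02 + (2) * (R 1 0) * hc10 + (2) * (R 1 1) * hc11 + (2) * (R 2 2) * hc11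
  ·
    refine caseLemma R t ![1 + R 0 0 + R 1 1 + R 2 2, R 2 1 - R 1 2, R 0 2 - R 2 0, R 1 0 - R 0 1] h0 ?_
    ext i j
    fin_cases i <;> fin_cases j <;>
      simp only [Rmat, Delta_expand, Matrix.smul_apply, smul_eq_mul, Fin.reduceFinMk, Fin.isValue,
        Matrix.cons_val', Matrix.cons_val_zero, Matrix.cons_val_one, Matrix.head_cons,
        Matrix.empty_val', Matrix.cons_val_fin_one, Matrix.head_fin_const, Matrix.cons_val_two,
        Matrix.cons_val_three, Matrix.tail_cons, Matrix.of_apply]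
    · linear_combination (-1) * ho00 + (-1) * (R 0 0) * ho00 + (-2) * (R 1 1) * ho00 + (-2) * (R 2 2) * ho00 + (2) * (R 0 1) * ho01 + (2) * (R 0 2) * ho02 + (1) * ho11 + (-1) * (R 0 0) * ho11 + (1) * ho22 + (-1) * (R 0 0) * ho22 + (-2) * hde + (2) * hc00 + (-2) * (R 0 1) * hc10 + (2) * (R 1 0) * hc10 + (-2) * (R 0 2) * hc20 + (2) * (R 2 0) * hc20
    · linear_combination (-1) * (R 0 1) * ho00 + (2) * (R 1 0) * ho00 + (-2) * ho01 + (-2) * (R 0 0) * ho01 + (-1) * (R 0 1) * ho11 + (-1) * (R 0 1) * ho22 + (2) * hc01 + (2) * (R 1 1) * hc10 + (-2) * (R 0 1) * hc11 + (2) * (R 2 1) * hc20 + (-2) * (R 0 2) * hc21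
    · linear_combination (-1) * (R 0 2) * ho00 + (-1) * (R 0 2) * ho11 + (2) * (R 2 0) * ho11 + (-2) * (R 1 0) * ho12 + (-1) * (R 0 2) * ho22 + (-2) * (R 1 2) * hc01 + (2) * hc02 + (2) * (R 1 1) * hc02 + (2) * (R 1 2) * hc10 + (-2) * (R 0 2) * hc11 + (2) * (R 0 0) * hc20 + (2) * (R 2 2) * hc20 + (2) * (R 0 1) * hc21
    · linear_combination (-1) * (R 1 0) * ho00 + (-2) * ho01 + (-2) * (R 1 1) * ho01 + (-2) * (R 2 2) * ho01 + (2) * (R 0 1) * ho11 + (-1) * (R 1 0) * ho11 + (2) * (R 0 2) * ho12 + (-2) * (R 2 0) * ho12 + (1) * (R 1 0) * ho22 + (2) * (R 0 1) * hc00 + (-2) * (R 1 0) * hc00 + (2) * (R 2 2) * hc01 + (-2) * (R 2 1) * hc02 + (-2) * (R 1 2) * hc20 + (2) * (R 2 1) * hc20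
    · linear_combination (1) * ho00 + (-1) * (R 1 1) * ho00 + (2) * (R 1 0) * ho01 + (-1) * ho11 + (-2) * (R 0 0) * ho11 + (-1) * (R 1 1) * ho11 + (-2) * (R 2 2) * ho11 + (2) * (R 1 2) * ho12 + (-2) * (R 2 1) * ho12 + (1) * ho22 + (1) * (R 1 1) * ho22 + (-2) * hde + (-2) * (R 2 2) * hc00 + (2) * (R 0 1) * hc01 + (-2) * (R 1 0) * hc01 + (2) * (R 2 0) * hc02 + (-2) * (R 1 2) * hc21 + (2) * (R 2 1) * hc21
    · linear_combination (-1) * (R 1 2) * ho00 + (-1) * (R 1 2) * ho11 + (2) * (R 2 1) * ho11 + (-2) * (R 1 1) * ho12 + (-2) * (R 2 2) * ho12 + (1) * (R 1 2) * ho22 + (2) * (R 2 1) * hc00 + (2) * (R 0 2) * hc01 + (-2) * (R 2 0) * hc01 + (-2) * (R 1 0) * hc02 + (2) * (R 1 0) * hc20 + (2) * (R 1 1) * hc21 + (2) * (R 2 2) * hc21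
    · linear_combination (-1) * (R 2 0) * ho00 + (-2) * ho02 + (-2) * (R 1 1) * ho02 + (-2) * (R 2 2) * ho02 + (1) * (R 2 0) * ho11 + (2) * (R 0 1) * ho12 + (-2) * (R 1 0) * ho12 + (2) * (R 0 2) * ho22 + (-1) * (R 2 0) * ho22 + (2) * (R 0 2) * hc00 + (-2) * (R 2 0) * hc00 + (-2) * (R 1 2) * hc01 + (2) * (R 1 1) * hc02 + (2) * (R 1 2) * hc10 + (-2) * (R 2 1) * hc10
    · linear_combination (-1) * (R 2 1) * ho00 + (2) * (R 1 0) * ho02 + (1) * (R 2 1) * ho11 + (-2) * ho12 + (-2) * (R 0 0) * ho12 + (-2) * (R 1 1) * ho12 + (-2) * (R 2 2) * ho12 + (2) * (R 1 2) * ho22 + (-1) * (R 2 1) * ho22 + (2) * (R 1 2) * hc00 + (2) * (R 0 2) * hc01 + (-2) * (R 2 0) * hc01 + (-2) * (R 1 0) * hc02 + (2) * (R 1 2) * hc11 + (-2) * (R 2 1) * hc11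
    · linear_combination (-1) * ho00 + (-1) * (R 2 2) * ho00 + (-1) * ho11 + (1) * (R 2 2) * ho11 + (-2) * (R 1 2) * ho12 + (2) * (R 2 1) * ho12 + (-1) * ho22 + (-2) * (R 1 1) * ho22 + (-1) * (R 2 2) * ho22 + (2) * hde + (-2) * hc00 + (-2) * (R 0 0) * hc00 + (-2) * (R 1 1) * hc00 + (-2) * (R 0 1) * hc01 + (2) * (R 1 0) * hc01 + (-2) * (R 2 0) * hc02 + (-2) * (R 1 0) * hc10 + (-2) * (R 1 1) * hc11 + (-2) * (R 2 2) * hc11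

/-- The Study quadric minus the exceptional 3-plane is in one-to-one correspondence with
`SE(3, ℝ)`: the map `[x, y] ↦ (u ↦ (1/Δ(x))(R(x) u + t(x, y)))` lands in `SE(3, ℝ)`,
two points of `S \ E` have the same image iff they are projectively equal, and every
rigid motion is attained. -/

theorem stmt10 :
    (∀ x y : Fin 4 → ℝ, (∑ i : Fin 4, x i * y i = 0) → Delta x ≠ 0 →
      motionF x y ∈ SE3) ∧
    (∀ x y x' y' : Fin 4 → ℝ, (∑ i : Fin 4, x i * y i = 0) → Delta x ≠ 0 →
      (∑ i : Fin 4, x' i * y' i = 0) → Delta x' ≠ 0 →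
      (motionF x y = motionF x' y' ↔ ∃ c : ℝ, c ≠ 0 ∧ x' = c • x ∧ y' = c • y)) ∧
    (∀ f ∈ SE3, ∃ x y : Fin 4 → ℝ, (∑ i : Fin 4, x i * y i = 0) ∧ Delta x ≠ 0 ∧
      motionF x y = f) := by
  refine ⟨fun x y _ hx => part1 x y hx, ?_, ?_⟩
  · intro x y x' y' hxy hx hxy' hx'
    constructor
    · exact part2fwd x y x' y' hxy hx hxy' hx'
    · rintro ⟨c, hc, rfl, rfl⟩
      exact (part2bwd x y hx c hc).symm
  · rintro f ⟨R, t, ho, hdet, rfl⟩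
    exact part3 R t ho hdet
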